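/- Let H be a linear hypergraph with n edges. In a greedy coloring processing vertices in non-increasing order of degree, when a vertex v of degree k ≥ 4 is about to be colored, the number of colors already used on vertices lying in edges incident with v is at most k·(⌊(n−1)/(k−1)⌋ − 1); in particular if this quantity is less than ⌈1.25n⌉ then a free color exists for v. -/
import Mathlib

lemma count_aux14 {V : Type*} [Fintype V] [DecidableEq V] {n k : ℕ}
    (E : Fin n → Finset V)
    (linear : ∀ i j : Fin n, i ≠ j → ((E i) ∩ (E j)).card ≤ 1)
    (i : Fin n) (A : Finset V) (hA : A ⊆ E i)
    (hdegA : ∀ u ∈ A, k ≤ (Finset.univ.filter (fun j => u ∈ E j)).card) :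
    A.card * (k - 1) ≤ n - 1 := by
  classical
  set F : V → Finset (Fin n) :=
    fun u => (Finset.univ.filter (fun j => u ∈ E j)).erase i with hF
  have hdisj : ∀ u ∈ A, ∀ u' ∈ A, u ≠ u' → Disjoint (F u) (F u') := by
    intro u hu u' hu' hne
    rw [Finset.disjoint_left]
    intro j hj hj'
    simp only [hF, Finset.mem_erase, Finset.mem_filter] at hj hj'
    have h2 : ({u, u'} : Finset V) ⊆ E i ∩ E j := by
      intro x hx
      simp only [Finset.mem_insert, Finset.mem_singleton] at hx
      rcases hx with rfl | rfl
      · exact Finset.mem_inter.mpr ⟨hA hu, hj.2.2⟩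
      · exact Finset.mem_inter.mpr ⟨hA hu', hj'.2.2⟩
    have := (Finset.card_le_card h2).trans (linear i j (Ne.symm hj.1))
    rw [Finset.card_insert_of_notMem (by simpa using hne), Finset.card_singleton] at this
    omega
  have hcard : ∀ u ∈ A, k - 1 ≤ (F u).card := by
    intro u hu
    have := Finset.pred_card_le_card_erase (s := Finset.univ.filter (fun j => u ∈ E j)) (a := i)
    have h := hdegA u hu
    simp only [hF]
    omega
  calc A.card * (k - 1) = ∑ _u ∈ A, (k - 1) := by rw [Finset.sum_const, smul_eq_mul]
    _ ≤ ∑ u ∈ A, (F u).card := Finset.sum_le_sum hcard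
    _ = (A.biUnion F).card := (Finset.card_biUnion hdisj).symm
    _ ≤ (Finset.univ.erase i).card := Finset.card_le_card (by
        intro j hj
        simp only [Finset.mem_biUnion, hF, Finset.mem_erase, Finset.mem_filter] at hj ⊢
        obtain ⟨u, _, hj1, _⟩ := hj
        exact ⟨hj1, Finset.mem_univ _⟩)
    _ = n - 1 := by rw [Finset.card_erase_of_mem (Finset.mem_univ _), Finset.card_univ,
        Fintype.card_fin]

/-- In a greedy coloring of a linear hypergraph with `n` edges,
processing vertices in non-increasing degree order, when a vertex `v` of degree
`k ≥ 4` is about to be colored (so every already-colored vertex has degree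
`≥ k`), the number of colors already used on colored vertices lying in edges
through `v` is at most `k·(⌊(n−1)/(k−1)⌋ − 1)`; in particular if this quantity
is less than `⌈1.25n⌉` then a free color `< ⌈1.25n⌉` exists for `v`. -/
theorem stmt_14 {V : Type*} [Fintype V] [DecidableEq V] (n k : ℕ) (hk : 4 ≤ k)
    (E : Fin n → Finset V)
    (linear : ∀ i j : Fin n, i ≠ j → ((E i) ∩ (E j)).card ≤ 1)
    (colored : Finset V) (c : V → ℕ)
    (hcolored : ∀ u ∈ colored, k ≤ (Finset.univ.filter (fun i => u ∈ E i)).card)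
    (v : V) (hv : v ∉ colored)
    (hdeg : (Finset.univ.filter (fun i => v ∈ E i)).card = k) :
    ((colored.filter (fun u => ∃ i : Fin n, v ∈ E i ∧ u ∈ E i)).image c).card
        ≤ k * ((n - 1) / (k - 1) - 1) ∧
      (k * ((n - 1) / (k - 1) - 1) < ⌈(1.25 : ℝ) * n⌉₊ →
        ∃ col < ⌈(1.25 : ℝ) * n⌉₊, ∀ u ∈ colored,
          (∃ i : Fin n, v ∈ E i ∧ u ∈ E i) → c u ≠ col) := by
  classical
  have hk1 : 0 < k - 1 := by omega
  set T := Finset.univ.filter (fun i => v ∈ E i) with hT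
  have hbound : ∀ i ∈ T, (E i ∩ colored).card ≤ (n - 1) / (k - 1) - 1 := by
    intro i hi
    have hvE : v ∈ E i := (Finset.mem_filter.mp hi).2
    have hA : insert v (E i ∩ colored) ⊆ E i := by
      intro x hx
      rcases Finset.mem_insert.mp hx with rfl | hx
      · exact hvE
      · exact (Finset.mem_inter.mp hx).1
    have hdegA : ∀ u ∈ insert v (E i ∩ colored),
        k ≤ (Finset.univ.filter (fun j => u ∈ E j)).card := by
      intro u hu
      rcases Finset.mem_insert.mp hu with rfl | hu
      · exact hdeg.ge
      · exact hcolored u (Finset.mem_inter.mp hu).2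
    have hc1 := count_aux14 E linear i _ hA hdegA
    have hci : (insert v (E i ∩ colored)).card = (E i ∩ colored).card + 1 :=
      Finset.card_insert_of_notMem (by simp [hv])
    rw [hci] at hc1
    have h2 : (E i ∩ colored).card + 1 ≤ (n - 1) / (k - 1) :=
      (Nat.le_div_iff_mul_le hk1).mpr hc1
    omega
  have hsub : colored.filter (fun u => ∃ i : Fin n, v ∈ E i ∧ u ∈ E i)
      ⊆ T.biUnion (fun i => E i ∩ colored) := by
    intro u hu
    obtain ⟨huc, i, hvi, hui⟩ := Finset.mem_filter.mp hu
    exact Finset.mem_biUnion.mpr ⟨i, by simp [hT, hvi], Finset.mem_inter.mpr ⟨hui, huc⟩⟩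
  have hmain : ((colored.filter (fun u => ∃ i : Fin n, v ∈ E i ∧ u ∈ E i)).image c).card
      ≤ k * ((n - 1) / (k - 1) - 1) := by
    calc ((colored.filter (fun u => ∃ i : Fin n, v ∈ E i ∧ u ∈ E i)).image c).card
        ≤ (colored.filter (fun u => ∃ i : Fin n, v ∈ E i ∧ u ∈ E i)).card :=
          Finset.card_image_le
      _ ≤ (T.biUnion (fun i => E i ∩ colored)).card := Finset.card_le_card hsub
      _ ≤ ∑ i ∈ T, (E i ∩ colored).card := Finset.card_biUnion_le
      _ ≤ ∑ _i ∈ T, ((n - 1) / (k - 1) - 1) := Finset.sum_le_sum hbound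
      _ = k * ((n - 1) / (k - 1) - 1) := by
          rw [Finset.sum_const, smul_eq_mul, hT, hdeg]
  refine ⟨hmain, fun hlt => ?_⟩
  set U := (colored.filter (fun u => ∃ i : Fin n, v ∈ E i ∧ u ∈ E i)).image c with hU
  set N := ⌈(1.25 : ℝ) * n⌉₊ with hN
  have hne : (Finset.range N \ U).Nonempty := by
    rw [← Finset.card_pos]
    have h1 : (Finset.range N).card - U.card ≤ (Finset.range N \ U).card :=
      Finset.le_card_sdiff U (Finset.range N)
    have h2 : U.card < N := lt_of_le_of_lt hmain hlt
    rw [Finset.card_range] at h1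
    omega
  obtain ⟨col, hcol⟩ := hne
  rw [Finset.mem_sdiff, Finset.mem_range] at hcol
  refine ⟨col, hcol.1, fun u hu hex hc => hcol.2 ?_⟩
  exact hc ▸ Finset.mem_image_of_mem c (Finset.mem_filter.mpr ⟨hu, hex⟩)
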